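/- Let ψ be an inner function with ψ(0) = 0 which is not an automorphism (equivalently 0 is the Denjoy–Wolff point and ψ^{[n]}(z) → 0 for each z ∈ 𝔻). Then ⋂_{n ≥ 0} C_ψ^n H²₀ = {0}, where H²₀ = {f ∈ H² : f(0) = 0} and C_ψ f = f ∘ ψ. -/

import Mathlib

open Complex Metric Filter MeasureTheory Set
open Real
open scoped NNReal ENNReal Topology

noncomputable section

/-- The Hardy space `H²`, modelled as the space of square-summable Taylor
coefficient sequences, i.e. `ℓ²(ℕ, ℂ)` with its Hilbert space structure. -/
abbrev H2 : Type := lp (fun _ : ℕ => ℂ) 2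

/-- Evaluation of an element of `H²` at a point of the unit disc, via its power series. -/
noncomputable def evalH2 (f : H2) (z : ℂ) : ℂ := ∑' n : ℕ, f n * z ^ n

/-- The reproducing kernel of `H²` at `w ∈ 𝔻` (junk value `0` if `‖w‖ ≥ 1`). -/
noncomputable def kern (w : ℂ) : H2 :=
  if h : ‖w‖ < 1 then
    ⟨fun n => (starRingEnd ℂ) w ^ n, by
      apply memℓp_gen
      have h2 : ‖w‖ ^ 2 < 1 := by nlinarith [norm_nonneg w]
      have hs : Summable fun n : ℕ => (‖w‖ ^ 2) ^ n :=
        summable_geometric_of_lt_one (by positivity) h2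
      convert hs using 2 with n
      rw [show ((2:ℝ≥0∞).toReal) = (2:ℝ) by simp]
      rw [norm_pow, RCLike.norm_conj, Real.rpow_two]
      ring⟩
  else 0

/-- `φ` is an inner function: its radial boundary values have modulus `1`
for almost every boundary angle. -/
def IsInnerFn (φ : ℂ → ℂ) : Prop :=
  ∀ᵐ θ : ℝ, Filter.Tendsto
    (fun r : ℝ => ‖φ ((r : ℂ) * Complex.exp ((θ : ℂ) * Complex.I))‖)
    (nhdsWithin 1 (Set.Iio 1)) (nhds 1)

def rseq (j : ℕ) : ℝ := 1 - 1/(j+2)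

lemma rseq_nonneg (j : ℕ) : 0 < rseq j := by
  have : (1:ℝ)/(j+2) ≤ 1/2 := by
    apply div_le_div_of_nonneg_left <;> [norm_num; norm_num; (push_cast; linarith)]
  simp only [rseq]; linarith

lemma rseq_lt_one (j : ℕ) : rseq j < 1 := by
  have : (0:ℝ) < 1/(j+2) := by positivity
  simp only [rseq]; linarith

lemma rseq_tendsto : Tendsto rseq atTop (𝓝[<] (1:ℝ)) := by
  apply tendsto_nhdsWithin_of_tendsto_nhds_of_eventually_within
  · have h : Tendsto (fun j : ℕ => (1:ℝ)/(j+2)) atTop (𝓝 0) := by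
      apply Tendsto.comp tendsto_one_div_atTop_nhds_zero_nat (tendsto_add_atTop_nat 2) |>.congr
      intro j; simp
    have := h.const_sub 1
    simp only [sub_zero] at this
    exact this.congr (fun j => by simp [rseq])
  · exact Eventually.of_forall fun j => rseq_lt_one j

lemma rseq_mono : Monotone rseq := by
  intro i j hij
  have : (1:ℝ)/(j+2) ≤ 1/(i+2) := by
    apply one_div_le_one_div_of_le (by positivity)
    have : (i:ℝ) ≤ j := Nat.cast_le.2 hij
    linarith
  simp only [rseq]; linarith

lemma summable_norm_coeff (f : H2) {w : ℂ} (hw : ‖w‖ < 1) :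
    Summable fun n : ℕ => ‖f n‖ * ‖w‖ ^ n := by
  apply Summable.of_nonneg_of_le (fun n => by positivity)
    (fun n => mul_le_mul_of_nonneg_right (lp.norm_apply_le_norm two_ne_zero f n) (by positivity))
  exact (summable_geometric_of_lt_one (norm_nonneg w) hw).mul_left _

lemma summable_coeff (f : H2) {w : ℂ} (hw : ‖w‖ < 1) :
    Summable fun n : ℕ => f n * w ^ n := by
  apply Summable.of_norm
  simpa [norm_mul] using summable_norm_coeff f hw

lemma hasSum_evalH2 (f : H2) {w : ℂ} (hw : ‖w‖ < 1) :
    HasSum (fun n : ℕ => f n * w ^ n) (evalH2 f w) :=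
  (summable_coeff f hw).hasSum

lemma evalH2_at_zero (f : H2) : evalH2 f 0 = f 0 := by
  rw [evalH2, tsum_eq_single 0]
  · simp
  · intro n hn; simp [zero_pow hn]

set_option maxHeartbeats 1000000 in
lemma evalH2_bound_of_zero (f : H2) (hf : evalH2 f 0 = 0) {w : ℂ} (hw : ‖w‖ < 1) :
    ‖evalH2 f w‖ ≤ ‖f‖ * ‖w‖ / (1 - ‖w‖) := by
  have hf0 : f 0 = 0 := by rw [← evalH2_at_zero f, hf]
  have hsum : Summable fun n : ℕ => ‖f n * w ^ n‖ :=
    (summable_norm_coeff f hw).congr fun n => by simp [norm_mul]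
  have h1 : ‖evalH2 f w‖ ≤ ∑' n : ℕ, ‖f n * w ^ n‖ := norm_tsum_le_tsum_norm hsum
  have h2 : ∑' n : ℕ, ‖f n * w ^ n‖ = ∑' n : ℕ, ‖f (n+1) * w ^ (n+1)‖ := by
    rw [Summable.tsum_eq_zero_add hsum]
    simp [hf0]
  have h3 : ∑' n : ℕ, ‖f (n+1) * w ^ (n+1)‖ ≤ ∑' n : ℕ, ‖f‖ * ‖w‖ ^ (n+1) := by
    apply Summable.tsum_le_tsum
    · intro n
      rw [norm_mul, norm_pow]
      exact mul_le_mul_of_nonneg_right (lp.norm_apply_le_norm two_ne_zero f (n+1)) (by positivity)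
    · exact (summable_nat_add_iff 1).2 hsum
    · exact (summable_nat_add_iff 1).2 (((summable_geometric_of_lt_one (norm_nonneg w) hw)).mul_left _)
  have h4 : ∑' n : ℕ, ‖f‖ * ‖w‖ ^ (n+1) = ‖f‖ * ‖w‖ / (1 - ‖w‖) := by
    have : ∀ n : ℕ, ‖f‖ * ‖w‖ ^ (n+1) = (‖f‖ * ‖w‖) * ‖w‖ ^ n := by
      intro n; ring
    rw [tsum_congr this, tsum_mul_left, tsum_geometric_of_lt_one (norm_nonneg w) hw]
    ring
  linarith

lemma norm_sq_eq (f : H2) : ‖f‖^2 = ∑' k : ℕ, ‖f k‖^2 := by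
  have h := lp.norm_rpow_eq_tsum (p := 2) (by norm_num) f
  have h2 : ((2:ℝ≥0∞)).toReal = (2:ℝ) := by norm_num
  rw [h2] at h
  calc ‖f‖^2 = ‖f‖ ^ (2:ℝ) := by rw [← Real.rpow_natCast]; norm_num
  _ = ∑' k : ℕ, ‖f k‖ ^ (2:ℝ) := h
  _ = ∑' k : ℕ, ‖f k‖^2 := by
      apply tsum_congr; intro k; rw [← Real.rpow_natCast]; norm_num

lemma circle_mean (φ : ℂ → ℂ) (hφ : DifferentiableOn ℂ φ (ball (0:ℂ) 1)) {r : ℝ}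
    (hr0 : 0 < r) (hr : r < 1) :
    (∫ θ in Set.Ioc (0:ℝ) (2*π), φ ((r:ℂ) * Complex.exp ((θ:ℂ) * Complex.I))) =
      ((2*π:ℝ):ℂ) * φ 0 := by
  have hsub : closedBall (0:ℂ) r ⊆ ball (0:ℂ) 1 :=
    (closedBall_subset_ball hr)
  have hd : DiffContOnCl ℂ φ (ball (0:ℂ) r) := by
    constructor
    · exact hφ.mono (ball_subset_ball hr.le)
    · rw [closure_ball (0:ℂ) hr0.ne']
      exact hφ.continuousOn.mono hsub
  have key := hd.circleIntegral_sub_inv_smul (w := 0) (mem_ball_self hr0)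
  rw [circleIntegral] at key
  simp only [deriv_circleMap, circleMap_zero, sub_zero, smul_eq_mul] at key
  have h2 : ∀ θ : ℝ, ((r:ℂ) * Complex.exp ((θ:ℂ) * Complex.I) * Complex.I) *
      (((r:ℂ) * Complex.exp ((θ:ℂ) * Complex.I))⁻¹ * φ ((r:ℂ) * Complex.exp ((θ:ℂ) * Complex.I)))
      = Complex.I * φ ((r:ℂ) * Complex.exp ((θ:ℂ) * Complex.I)) := by
    intro θ
    have ha : (r:ℂ) * Complex.exp ((θ:ℂ) * Complex.I) ≠ 0 :=
      mul_ne_zero (by exact_mod_cast hr0.ne') (Complex.exp_ne_zero _)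
    have hr' : (r:ℂ) ≠ 0 := by exact_mod_cast hr0.ne'
    field_simp
  rw [intervalIntegral.integral_congr (g := fun θ : ℝ =>
      Complex.I * φ ((r:ℂ) * Complex.exp ((θ:ℂ) * Complex.I))) (fun θ _ => h2 θ)] at key
  rw [intervalIntegral.integral_const_mul] at key
  have h3 : (2 * ↑π * Complex.I) * φ 0 = Complex.I * (((2*π:ℝ):ℂ) * φ 0) := by
    push_cast; ring
  rw [h3] at key
  have key2 := mul_left_cancel₀ Complex.I_ne_zero key
  rw [← key2, intervalIntegral.integral_of_le (by positivity)]

lemma exp_orth (k j : ℕ) :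
    (∫ θ in Set.Ioc (0:ℝ) (2*π),
      Complex.exp ((k:ℂ)*(θ:ℂ)*Complex.I) * (starRingEnd ℂ) (Complex.exp ((j:ℂ)*(θ:ℂ)*Complex.I)))
    = if k = j then ((2*π:ℝ):ℂ) else 0 := by
  have hpt : ∀ θ : ℝ, Complex.exp ((k:ℂ)*(θ:ℂ)*Complex.I) *
      (starRingEnd ℂ) (Complex.exp ((j:ℂ)*(θ:ℂ)*Complex.I))
      = Complex.exp ((((k:ℝ)-(j:ℝ)) * Complex.I) * (θ:ℂ)) := by
    intro θ
    rw [← Complex.exp_conj, ← Complex.exp_add]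
    congr 1
    have : (starRingEnd ℂ) ((j:ℂ)*(θ:ℂ)*Complex.I) = -((j:ℂ)*(θ:ℂ)*Complex.I) := by
      simp [map_mul, Complex.conj_I, Complex.conj_ofReal]
    rw [this]; push_cast; ring
  rw [setIntegral_congr_fun measurableSet_Ioc (fun θ _ => hpt θ)]
  by_cases hkj : k = j
  · subst hkj
    simp only [sub_self, zero_mul, Complex.exp_zero, if_true]
    rw [setIntegral_const]
    simp [Real.volume_Ioc, ENNReal.toReal_ofReal (by positivity : (0:ℝ) ≤ 2*π),
      max_eq_left (by positivity : (0:ℝ) ≤ 2*π)]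
  · have hne : (((k:ℝ):ℂ)) ≠ ((j:ℝ):ℂ) := by exact_mod_cast hkj
    have hc : (((k:ℝ)-(j:ℝ)) * Complex.I) ≠ 0 := by
      exact mul_ne_zero (sub_ne_zero.2 hne) Complex.I_ne_zero
    rw [if_neg hkj, ← intervalIntegral.integral_of_le (by positivity : (0:ℝ) ≤ 2*π)]
    rw [integral_exp_mul_complex hc]
    have : Complex.exp ((((k:ℝ)-(j:ℝ)) * Complex.I) * ((2*π:ℝ):ℂ)) = 1 := by
      have := Complex.exp_int_mul_two_pi_mul_I ((k:ℤ) - (j:ℤ))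
      rw [← this]; congr 1; push_cast; ring
    rw [this]
    simp

lemma parseval (h : H2) {r : ℝ} (hr0 : 0 ≤ r) (hr : r < 1) :
    (∫ θ in Set.Ioc (0:ℝ) (2*π), evalH2 h ((r:ℂ) * Complex.exp ((θ:ℂ) * Complex.I)) *
      (starRingEnd ℂ) (evalH2 h ((r:ℂ) * Complex.exp ((θ:ℂ) * Complex.I)))) =
    (((2*π) * ∑' k : ℕ, ‖h k‖^2 * r^(2*k) : ℝ) : ℂ) := by
  set w : ℝ → ℂ := fun θ => (r:ℂ) * Complex.exp ((θ:ℂ) * Complex.I) with hwdef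
  have hwn : ∀ θ, ‖w θ‖ = r := by
    intro θ
    simp only [hwdef, norm_mul, Complex.norm_real, Real.norm_eq_abs,
      Complex.norm_exp_ofReal_mul_I, mul_one]
    exact _root_.abs_of_nonneg hr0
  have hwlt : ∀ θ, ‖w θ‖ < 1 := fun θ => by rw [hwn]; exact hr
  set G : ℕ × ℕ → ℝ → ℂ :=
    fun p θ => (h p.1 * w θ ^ p.1) * (starRingEnd ℂ) (h p.2 * w θ ^ p.2) with hGdef
  have hGnorm : ∀ (p : ℕ × ℕ) (θ : ℝ),
      ‖G p θ‖ = (‖h p.1‖ * r ^ p.1) * (‖h p.2‖ * r ^ p.2) := by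
    intro p θ
    rw [hGdef]
    rw [norm_mul, RCLike.norm_conj, norm_mul, norm_mul, norm_pow, norm_pow, hwn θ]
  have h1sum : Summable fun k : ℕ => ‖h k‖ * r ^ k := by
    have hnr : ‖((r:ℝ):ℂ)‖ < 1 := by
      rw [Complex.norm_real, Real.norm_eq_abs, _root_.abs_of_nonneg hr0]; exact hr
    have := summable_norm_coeff h hnr
    apply this.congr
    intro k
    rw [Complex.norm_real, Real.norm_eq_abs, _root_.abs_of_nonneg hr0]
  have hsummable : Summable (fun p : ℕ × ℕ => (‖h p.1‖ * r ^ p.1) * (‖h p.2‖ * r ^ p.2)) :=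
    h1sum.mul_of_nonneg h1sum (fun k => by positivity) (fun k => by positivity)
  have hGsummable : ∀ θ, Summable fun p : ℕ × ℕ => G p θ := by
    intro θ
    exact Summable.of_norm_bounded hsummable (fun p => le_of_eq (hGnorm p θ))
  have hpt : ∀ θ : ℝ, evalH2 h (w θ) * (starRingEnd ℂ) (evalH2 h (w θ)) = ∑' p : ℕ × ℕ, G p θ := by
    intro θ
    have h1 := hasSum_evalH2 h (hwlt θ)
    have h2 : HasSum (fun j : ℕ => (starRingEnd ℂ) (h j * w θ ^ j))
        ((starRingEnd ℂ) (evalH2 h (w θ))) := Complex.hasSum_conj'.2 h1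
    exact ((h1.mul h2 (hGsummable θ)).tsum_eq).symm
  rw [setIntegral_congr_fun measurableSet_Ioc (fun θ _ => hpt θ)]
  have hwcont : Continuous w := by
    apply continuous_const.mul
    exact Complex.continuous_exp.comp (Complex.continuous_ofReal.mul continuous_const)
  have hmeas : ∀ p : ℕ × ℕ, AEStronglyMeasurable (G p)
      (volume.restrict (Set.Ioc (0:ℝ) (2*π))) := by
    intro p
    apply Continuous.aestronglyMeasurable
    apply Continuous.mul
    · exact continuous_const.mul (hwcont.pow p.1)
    · exact Complex.continuous_conj.comp (continuous_const.mul (hwcont.pow p.2))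
  have hfin : ∑' p : ℕ × ℕ, ∫⁻ θ, ‖G p θ‖₊ ∂(volume.restrict (Set.Ioc (0:ℝ) (2*π))) ≠ ⊤ := by
    have heq : ∀ p : ℕ × ℕ, ∫⁻ θ, ‖G p θ‖₊ ∂(volume.restrict (Set.Ioc (0:ℝ) (2*π)))
        = ENNReal.ofReal ((‖h p.1‖ * r ^ p.1) * (‖h p.2‖ * r ^ p.2) * (2*π)) := by
      intro p
      have hc : ∀ θ : ℝ, (‖G p θ‖₊ : ℝ≥0∞)
          = ENNReal.ofReal ((‖h p.1‖ * r ^ p.1) * (‖h p.2‖ * r ^ p.2)) := by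
        intro θ
        rw [← enorm_eq_nnnorm, ← ofReal_norm, hGnorm p θ]
      rw [lintegral_congr hc, lintegral_const, Measure.restrict_apply_univ, Real.volume_Ioc,
        ← ENNReal.ofReal_mul (by positivity)]
      congr 1
      ring
    rw [tsum_congr heq, ← ENNReal.ofReal_tsum_of_nonneg (fun p => by positivity)
      (hsummable.mul_right _)]
    exact ENNReal.ofReal_ne_top
  rw [MeasureTheory.integral_tsum hmeas hfin]
  have hint : ∀ p : ℕ × ℕ, (∫ θ in Set.Ioc (0:ℝ) (2*π), G p θ)
      = if p.1 = p.2 then ((2*π:ℝ):ℂ) * (h p.1 * (starRingEnd ℂ) (h p.1) * (r:ℂ)^(p.1+p.1)) else 0 := by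
    rintro ⟨k, j⟩
    have hsplit : ∀ θ : ℝ, G (k, j) θ = (h k * (starRingEnd ℂ) (h j) * (r:ℂ)^(k+j)) *
        (Complex.exp ((k:ℂ)*(θ:ℂ)*Complex.I) * (starRingEnd ℂ) (Complex.exp ((j:ℂ)*(θ:ℂ)*Complex.I))) := by
      intro θ
      have he1 : Complex.exp ((k:ℂ)*(θ:ℂ)*Complex.I) = Complex.exp ((θ:ℂ)*Complex.I) ^ k := by
        rw [← Complex.exp_nat_mul]; ring_nf
      have he2 : Complex.exp ((j:ℂ)*(θ:ℂ)*Complex.I) = Complex.exp ((θ:ℂ)*Complex.I) ^ j := by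
        rw [← Complex.exp_nat_mul]; ring_nf
      simp only [hGdef, hwdef, he1, he2, map_mul, map_pow, pow_add, mul_pow,
        Complex.conj_ofReal]
      ring
    rw [setIntegral_congr_fun measurableSet_Ioc (fun θ _ => hsplit θ),
      MeasureTheory.integral_const_mul, exp_orth k j]
    split_ifs with hkj
    · subst hkj
      ring
    · exact mul_zero _
  rw [tsum_congr hint]
  have hdiagsum : Summable (fun p : ℕ × ℕ =>
      if p.1 = p.2 then ((2*π:ℝ):ℂ) * (h p.1 * (starRingEnd ℂ) (h p.1) * (r:ℂ)^(p.1+p.1)) else 0) := by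
    apply Summable.of_norm_bounded (hsummable.mul_left (2*π))
    rintro ⟨k, j⟩
    by_cases hp : k = j
    · subst hp
      rw [if_pos rfl]
      apply le_of_eq
      rw [norm_mul, norm_mul, norm_mul, RCLike.norm_conj, norm_pow, Complex.norm_real,
        Complex.norm_real, Real.norm_eq_abs, Real.norm_eq_abs,
        _root_.abs_of_nonneg (by positivity : (0:ℝ) ≤ 2*π), _root_.abs_of_nonneg hr0]
      ring
    · rw [if_neg hp]
      simp only [norm_zero]
      positivity
  rw [Summable.tsum_prod' hdiagsum (fun k => by
    apply summable_of_ne_finset_zero (s := {k})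
    intro j hj
    rw [if_neg]
    intro hh
    exact hj (by simpa using hh.symm))]
  have hin : ∀ k : ℕ, (∑' j : ℕ, if k = j then
      ((2*π:ℝ):ℂ) * (h k * (starRingEnd ℂ) (h k) * (r:ℂ)^(k+k)) else 0)
      = ((2*π:ℝ):ℂ) * (((‖h k‖^2 * r^(2*k) : ℝ)):ℂ) := by
    intro k
    rw [tsum_eq_single k (fun j hj => if_neg (fun hh => hj hh.symm))]
    rw [if_pos rfl, Complex.mul_conj]
    rw [Complex.normSq_eq_norm_sq]
    rw [two_mul]
    push_cast
    ring
  rw [tsum_congr hin, tsum_mul_left]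
  push_cast [Complex.ofReal_tsum]
  ring

lemma key_inner_limit (ψ : ℂ → ℂ)
    (hanal : DifferentiableOn ℂ ψ (ball (0:ℂ) 1))
    (hmaps : Set.MapsTo ψ (ball (0:ℂ) 1) (ball (0:ℂ) 1))
    (hψ0 : ψ 0 = 0)
    (hinner : ∀ᵐ θ : ℝ, Filter.Tendsto
      (fun ρ : ℝ => ‖ψ ((ρ : ℂ) * Complex.exp ((θ : ℂ) * Complex.I))‖)
      (nhdsWithin 1 (Set.Iio 1)) (nhds 1)) (m n : ℕ) (hnm : n ≤ m) :
    Tendsto (fun j : ℕ => ∫ θ in Set.Ioc (0:ℝ) (2*π),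
        ψ ((rseq j : ℂ) * Complex.exp ((θ:ℂ) * Complex.I)) ^ m *
          (starRingEnd ℂ) (ψ ((rseq j : ℂ) * Complex.exp ((θ:ℂ) * Complex.I))) ^ n)
      atTop (𝓝 (if m = n then ((2*π:ℝ):ℂ) else 0)) := by
  set w : ℕ → ℝ → ℂ := fun j θ => ((rseq j : ℝ) : ℂ) * Complex.exp ((θ:ℂ) * Complex.I) with hwdef
  have hwmem : ∀ j θ, w j θ ∈ ball (0:ℂ) 1 := by
    intro j θ
    rw [mem_ball_zero_iff, hwdef]
    simp only [norm_mul, Complex.norm_real, Real.norm_eq_abs, Complex.norm_exp_ofReal_mul_I,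
      mul_one]
    rw [_root_.abs_of_nonneg (rseq_nonneg j).le]
    exact rseq_lt_one j
  have hwcont : ∀ j, Continuous (w j) := by
    intro j
    exact continuous_const.mul (Complex.continuous_exp.comp
      (Complex.continuous_ofReal.mul continuous_const))
  have hψwcont : ∀ j, Continuous fun θ => ψ (w j θ) := fun j =>
    hanal.continuousOn.comp_continuous (hwcont j) (fun θ => hwmem j θ)
  have hψlt : ∀ j θ, ‖ψ (w j θ)‖ < 1 := by
    intro j θ
    have := hmaps (hwmem j θ)
    rwa [mem_ball_zero_iff] at this
  set d : ℕ := m - n with hd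
  -- the mean value part
  have hmean : ∀ j, (∫ θ in Set.Ioc (0:ℝ) (2*π), ψ (w j θ) ^ d)
      = if m = n then ((2*π:ℝ):ℂ) else 0 := by
    intro j
    have := circle_mean (fun z => ψ z ^ d) (hanal.pow d) (rseq_nonneg j) (rseq_lt_one j)
    rw [this]
    simp only [hψ0]
    by_cases hmn : m = n
    · have hd0 : d = 0 := by omega
      rw [hd0, if_pos hmn]
      simp
    · have hd0 : d ≠ 0 := by omega
      rw [if_neg hmn, zero_pow hd0, mul_zero]
  -- the error part
  set err : ℕ → ℝ → ℂ := fun j θ => ψ (w j θ) ^ d *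
    ((ψ (w j θ) * (starRingEnd ℂ) (ψ (w j θ))) ^ n - 1) with herrdef
  have hsplit : ∀ j θ, ψ (w j θ) ^ m * (starRingEnd ℂ) (ψ (w j θ)) ^ n
      = ψ (w j θ) ^ d + err j θ := by
    intro j θ
    simp only [herrdef]
    have hmdn : m = d + n := by omega
    rw [hmdn, pow_add]
    ring
  have herrcont : ∀ j, Continuous (err j) := by
    intro j
    apply Continuous.mul ((hψwcont j).pow d)
    apply Continuous.sub _ continuous_const
    exact (((hψwcont j).mul ((Complex.continuous_conj).comp (hψwcont j))).pow n)
  have herrbound : ∀ j θ, ‖err j θ‖ ≤ ‖(ψ (w j θ) * (starRingEnd ℂ) (ψ (w j θ))) ^ n - 1‖ := by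
    intro j θ
    rw [herrdef]
    simp only [norm_mul]
    have h1 : ‖ψ (w j θ) ^ d‖ ≤ 1 := by
      rw [norm_pow]
      exact pow_le_one₀ (norm_nonneg _) (le_of_lt (by exact hψlt j θ))
    nlinarith [norm_nonneg ((ψ (w j θ) * (starRingEnd ℂ) (ψ (w j θ))) ^ n - 1)]
  have habs2 : ∀ j θ, ψ (w j θ) * (starRingEnd ℂ) (ψ (w j θ))
      = (((‖ψ (w j θ)‖ : ℝ) : ℂ)) ^ 2 := by
    intro j θ
    rw [Complex.mul_conj, Complex.normSq_eq_norm_sq]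
    push_cast
    ring
  have herr2 : ∀ j θ, ‖(ψ (w j θ) * (starRingEnd ℂ) (ψ (w j θ))) ^ n - 1‖ ≤ 2 := by
    intro j θ
    have : ‖(ψ (w j θ) * (starRingEnd ℂ) (ψ (w j θ))) ^ n‖ ≤ 1 := by
      rw [habs2, ← pow_mul, norm_pow]
      apply pow_le_one₀ (norm_nonneg _)
      rw [Complex.norm_real, Real.norm_eq_abs, _root_.abs_of_nonneg (norm_nonneg _)]
      exact (hψlt j θ).le
    calc ‖(ψ (w j θ) * (starRingEnd ℂ) (ψ (w j θ))) ^ n - 1‖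
        ≤ ‖(ψ (w j θ) * (starRingEnd ℂ) (ψ (w j θ))) ^ n‖ + ‖(1:ℂ)‖ := norm_sub_le _ _
      _ ≤ 2 := by rw [norm_one]; linarith
  -- dominated convergence for err
  have herrlim : Tendsto (fun j => ∫ θ in Set.Ioc (0:ℝ) (2*π), err j θ) atTop (𝓝 0) := by
    have h0 : (0:ℂ) = ∫ (_ : ℝ) in Set.Ioc (0:ℝ) (2*π), (0:ℂ) := by simp
    rw [h0]
    apply MeasureTheory.tendsto_integral_of_dominated_convergence (fun _ => (2:ℝ))
    · exact fun j => (herrcont j).aestronglyMeasurable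
    · exact (integrable_const _)
    · intro j
      exact Eventually.of_forall fun θ => (herrbound j θ).trans (herr2 j θ)
    · -- a.e. pointwise convergence
      have hae : ∀ᵐ θ : ℝ ∂(volume.restrict (Set.Ioc (0:ℝ) (2*π))), Filter.Tendsto
          (fun ρ : ℝ => ‖ψ ((ρ : ℂ) * Complex.exp ((θ : ℂ) * Complex.I))‖)
          (nhdsWithin 1 (Set.Iio 1)) (nhds 1) := ae_restrict_of_ae hinner
      filter_upwards [hae] with θ hθ
      have habsj : Tendsto (fun j => ‖ψ (w j θ)‖) atTop (𝓝 1) := by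
        exact hθ.comp rseq_tendsto
      have hcoe : Tendsto (fun j => ((‖ψ (w j θ)‖ : ℝ) : ℂ)) atTop (𝓝 1) := by
        have := (Complex.continuous_ofReal.tendsto 1).comp habsj
        simpa [Function.comp_def] using this
      have hprod : Tendsto (fun j => (ψ (w j θ) * (starRingEnd ℂ) (ψ (w j θ))) ^ n - 1)
          atTop (𝓝 0) := by
        have h1 : Tendsto (fun j => (((‖ψ (w j θ)‖ : ℝ) : ℂ)) ^ (2*n)) atTop
            (𝓝 1) := by
          have := hcoe.pow (2*n)
          simpa using this
        have h2 := h1.sub_const 1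
        rw [sub_self] at h2
        apply h2.congr
        intro j
        rw [habs2 j θ, ← pow_mul]
      -- squeeze
      have hnorm : Tendsto (fun j => ‖err j θ‖) atTop (𝓝 0) := by
        apply squeeze_zero (fun j => norm_nonneg _) (fun j => herrbound j θ)
        have := hprod.norm
        simpa using this
      exact tendsto_zero_iff_norm_tendsto_zero.2 hnorm
  -- combine
  have hIeq : ∀ j, (∫ θ in Set.Ioc (0:ℝ) (2*π),
      ψ (w j θ) ^ m * (starRingEnd ℂ) (ψ (w j θ)) ^ n)
      = (if m = n then ((2*π:ℝ):ℂ) else 0) + ∫ θ in Set.Ioc (0:ℝ) (2*π), err j θ := by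
    intro j
    rw [setIntegral_congr_fun measurableSet_Ioc (fun θ _ => hsplit j θ)]
    rw [MeasureTheory.integral_add]
    · rw [hmean j]
    · exact ((hψwcont j).pow d).integrableOn_Ioc
    · exact (herrcont j).integrableOn_Ioc
  have := (tendsto_const_nhds (x := if m = n then ((2*π:ℝ):ℂ) else 0) (f := atTop (α := ℕ))).add
    herrlim
  rw [add_zero] at this
  apply this.congr
  intro j
  exact (hIeq j).symm

lemma inner_limit (ψ : ℂ → ℂ)
    (hanal : DifferentiableOn ℂ ψ (ball (0:ℂ) 1))
    (hmaps : Set.MapsTo ψ (ball (0:ℂ) 1) (ball (0:ℂ) 1))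
    (hψ0 : ψ 0 = 0)
    (hinner : ∀ᵐ θ : ℝ, Filter.Tendsto
      (fun ρ : ℝ => ‖ψ ((ρ : ℂ) * Complex.exp ((θ : ℂ) * Complex.I))‖)
      (nhdsWithin 1 (Set.Iio 1)) (nhds 1)) (m n : ℕ) :
    Tendsto (fun j : ℕ => ∫ θ in Set.Ioc (0:ℝ) (2*π),
        ψ ((rseq j : ℂ) * Complex.exp ((θ:ℂ) * Complex.I)) ^ m *
          (starRingEnd ℂ) (ψ ((rseq j : ℂ) * Complex.exp ((θ:ℂ) * Complex.I))) ^ n)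
      atTop (𝓝 (if m = n then ((2*π:ℝ):ℂ) else 0)) := by
  by_cases hnm : n ≤ m
  · exact key_inner_limit ψ hanal hmaps hψ0 hinner m n hnm
  · have hkey := key_inner_limit ψ hanal hmaps hψ0 hinner n m (by omega)
    have hconj := ((Complex.continuous_conj).tendsto _).comp hkey
    have hne : ¬ (m = n) := by omega
    have hne' : ¬ (n = m) := by omega
    rw [if_neg hne]
    rw [if_neg hne', map_zero] at hconj
    simp only [Function.comp_def] at hconj
    apply hconj.congr
    intro j
    rw [← integral_conj]
    apply setIntegral_congr_fun measurableSet_Ioc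
    intro θ _
    simp only [map_mul, map_pow, Complex.conj_conj]
    ring

lemma abel_mono {a : ℕ → ℝ} (ha : ∀ k, 0 ≤ a k) (hs : Summable a) :
    Tendsto (fun j : ℕ => ∑' k : ℕ, a k * (rseq j)^(2*k)) atTop (𝓝 (∑' k, a k)) := by
  have hsj : ∀ j, Summable fun k => a k * (rseq j)^(2*k) := by
    intro j
    apply Summable.of_nonneg_of_le (fun k => mul_nonneg (ha k) (pow_nonneg (rseq_nonneg j).le _)) _ hs
    intro k
    have h1 : (rseq j)^(2*k) ≤ 1 :=
      pow_le_one₀ (rseq_nonneg j).le (rseq_lt_one j).le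
    calc a k * (rseq j)^(2*k) ≤ a k * 1 := by
          apply mul_le_mul_of_nonneg_left h1 (ha k)
      _ = a k := mul_one _
  rw [Metric.tendsto_atTop]
  intro ε hε
  -- pick N with tail small
  have htend := hs.hasSum.tendsto_sum_nat
  rw [Metric.tendsto_atTop] at htend
  obtain ⟨N, hN⟩ := htend (ε/2) (by positivity)
  have hNs := hN N le_rfl
  rw [Real.dist_eq] at hNs
  -- finite sum tendsto
  have hfin : Tendsto (fun j => ∑ k ∈ Finset.range N, a k * (rseq j)^(2*k)) atTop
      (𝓝 (∑ k ∈ Finset.range N, a k)) := by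
    apply tendsto_finset_sum
    intro k _
    have h1 : Tendsto rseq atTop (𝓝 1) := rseq_tendsto.mono_right nhdsWithin_le_nhds
    have h2 := (h1.pow (2*k)).const_mul (a k)
    simpa using h2
  rw [Metric.tendsto_atTop] at hfin
  obtain ⟨M, hM⟩ := hfin (ε/2) (by positivity)
  refine ⟨M, fun j hj => ?_⟩
  have hupper : ∑' k : ℕ, a k * (rseq j)^(2*k) ≤ ∑' k, a k := by
    apply Summable.tsum_le_tsum _ (hsj j) hs
    intro k
    have h1 : (rseq j)^(2*k) ≤ 1 := pow_le_one₀ (rseq_nonneg j).le (rseq_lt_one j).le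
    calc a k * (rseq j)^(2*k) ≤ a k * 1 := mul_le_mul_of_nonneg_left h1 (ha k)
      _ = a k := mul_one _
  have hlower : ∑ k ∈ Finset.range N, a k * (rseq j)^(2*k) ≤ ∑' k : ℕ, a k * (rseq j)^(2*k) :=
    Summable.sum_le_tsum _ (fun k _ => mul_nonneg (ha k) (pow_nonneg (rseq_nonneg j).le _)) (hsj j)
  have hMj := hM j hj
  rw [Real.dist_eq] at hMj
  have hsum_nonneg : ∑ k ∈ Finset.range N, a k ≤ ∑' k, a k :=
    Summable.sum_le_tsum _ (fun k _ => ha k) hs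
  rw [Real.dist_eq]
  rw [abs_sub_lt_iff]
  constructor
  · -- x_j - S < ε
    have : ∑' k : ℕ, a k * (rseq j)^(2*k) - ∑' k, a k ≤ 0 := by linarith
    linarith
  · -- S - x_j < ε
    have h1 : ∑' k, a k - ∑ k ∈ Finset.range N, a k < ε/2 := by
      rw [abs_sub_lt_iff] at hNs
      linarith [hNs.2]
    have h2 : ∑ k ∈ Finset.range N, a k - ∑ k ∈ Finset.range N, a k * (rseq j)^(2*k) < ε/2 := by
      rw [abs_sub_lt_iff] at hMj
      linarith [hMj.2]
    linarith

lemma eval_pow_iter (ψ : ℂ → ℂ) (hmaps : Set.MapsTo ψ (ball (0:ℂ) 1) (ball (0:ℂ) 1))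
    (T : H2 →L[ℂ] H2)
    (hT : ∀ (f : H2), ∀ z ∈ ball (0:ℂ) 1, evalH2 (T f) z = evalH2 f (ψ z)) :
    ∀ (nn : ℕ) (f : H2), ∀ z ∈ ball (0:ℂ) 1, evalH2 ((T ^ nn) f) z = evalH2 f (ψ^[nn] z) := by
  intro nn
  induction nn with
  | zero => intro f z hz; simp
  | succ k ih =>
    intro f z hz
    rw [pow_succ]
    have h1 : (T ^ k * T) f = (T ^ k) (T f) := rfl
    rw [h1, ih (T f) z hz, hT f _ (hmaps.iterate k hz), Function.iterate_succ_apply' ψ k z]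

lemma normT_eq (ψ : ℂ → ℂ)
    (hanal : DifferentiableOn ℂ ψ (ball (0:ℂ) 1))
    (hmaps : Set.MapsTo ψ (ball (0:ℂ) 1) (ball (0:ℂ) 1))
    (hψ0 : ψ 0 = 0)
    (hinner : ∀ᵐ θ : ℝ, Filter.Tendsto
      (fun ρ : ℝ => ‖ψ ((ρ : ℂ) * Complex.exp ((θ : ℂ) * Complex.I))‖)
      (nhdsWithin 1 (Set.Iio 1)) (nhds 1))
    (T : H2 →L[ℂ] H2)
    (hT : ∀ (f : H2), ∀ z ∈ ball (0:ℂ) 1, evalH2 (T f) z = evalH2 f (ψ z))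
    (p : H2) (N : ℕ) (hp : ∀ m, N ≤ m → p m = 0) :
    ‖T p‖ = ‖p‖ := by
  set w : ℕ → ℝ → ℂ := fun j θ => ((rseq j : ℝ) : ℂ) * Complex.exp ((θ:ℂ) * Complex.I) with hwdef
  have hwmem : ∀ j θ, w j θ ∈ ball (0:ℂ) 1 := by
    intro j θ
    rw [mem_ball_zero_iff, hwdef]
    simp only [norm_mul, Complex.norm_real, Real.norm_eq_abs, Complex.norm_exp_ofReal_mul_I,
      mul_one]
    rw [_root_.abs_of_nonneg (rseq_nonneg j).le]
    exact rseq_lt_one j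
  have hwcont : ∀ j, Continuous (w j) :=
    fun j => continuous_const.mul (Complex.continuous_exp.comp
      (Complex.continuous_ofReal.mul continuous_const))
  have hψwcont : ∀ j, Continuous fun θ => ψ (w j θ) := fun j =>
    hanal.continuousOn.comp_continuous (hwcont j) (fun θ => hwmem j θ)
  have hpoly : ∀ z : ℂ, evalH2 p z = ∑ m ∈ Finset.range N, p m * z ^ m := by
    intro z
    apply tsum_eq_sum
    intro m hm
    rw [hp m (le_of_not_gt (by simpa using hm))]
    ring
  have hTpsum : Summable (fun k => ‖(T p) k‖^2) := by
    have h1 := (lp.memℓp (T p)).summable (p := 2) (by norm_num)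
    apply h1.congr
    intro k
    rw [show ((2:ℝ≥0∞)).toReal = (2:ℝ) by norm_num, Real.rpow_two]
  have hL : Tendsto (fun j => (((2*π) * ∑' k, ‖(T p) k‖^2 * (rseq j)^(2*k) : ℝ) : ℂ)) atTop
      (𝓝 ((((2*π) * ∑' k, ‖(T p) k‖^2 : ℝ)) : ℂ)) := by
    have h1 := abel_mono (fun k => sq_nonneg _) hTpsum
    have h2 := h1.const_mul (2*π)
    exact (Complex.continuous_ofReal.tendsto _).comp h2
  have hchain : ∀ j, (((2*π) * ∑' k, ‖(T p) k‖^2 * (rseq j)^(2*k) : ℝ) : ℂ)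
      = ∑ m ∈ Finset.range N, ∑ n ∈ Finset.range N, (p m * (starRingEnd ℂ) (p n)) *
          ∫ θ in Set.Ioc (0:ℝ) (2*π), ψ (w j θ)^m * (starRingEnd ℂ) (ψ (w j θ))^n := by
    intro j
    rw [← parseval (T p) (rseq_nonneg j).le (rseq_lt_one j)]
    have hptw : ∀ θ : ℝ, evalH2 (T p) (w j θ) * (starRingEnd ℂ) (evalH2 (T p) (w j θ))
        = ∑ m ∈ Finset.range N, ∑ n ∈ Finset.range N,
            (p m * (starRingEnd ℂ) (p n)) * (ψ (w j θ)^m * (starRingEnd ℂ) (ψ (w j θ))^n) := by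
      intro θ
      rw [hT p _ (hwmem j θ), hpoly (ψ (w j θ)), map_sum, Finset.sum_mul_sum]
      apply Finset.sum_congr rfl
      intro m _
      apply Finset.sum_congr rfl
      intro n _
      simp only [map_mul, map_pow]
      ring
    rw [setIntegral_congr_fun measurableSet_Ioc (fun θ _ => hptw θ)]
    rw [MeasureTheory.integral_finset_sum]
    · apply Finset.sum_congr rfl
      intro m _
      rw [MeasureTheory.integral_finset_sum]
      · apply Finset.sum_congr rfl
        intro n _
        rw [MeasureTheory.integral_const_mul]
      · intro n _
        apply Continuous.integrableOn_Ioc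
        exact continuous_const.mul (((hψwcont j).pow m).mul
          ((Complex.continuous_conj.comp (hψwcont j)).pow n))
    · intro m _
      apply Continuous.integrableOn_Ioc
      apply continuous_finset_sum
      intro n _
      exact continuous_const.mul (((hψwcont j).pow m).mul
        ((Complex.continuous_conj.comp (hψwcont j)).pow n))
  have hR : Tendsto (fun j => ∑ m ∈ Finset.range N, ∑ n ∈ Finset.range N,
      (p m * (starRingEnd ℂ) (p n)) *
        ∫ θ in Set.Ioc (0:ℝ) (2*π), ψ (w j θ)^m * (starRingEnd ℂ) (ψ (w j θ))^n) atTop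
      (𝓝 (∑ m ∈ Finset.range N, ∑ n ∈ Finset.range N,
        (p m * (starRingEnd ℂ) (p n)) * (if m = n then ((2*π:ℝ):ℂ) else 0))) := by
    apply tendsto_finset_sum
    intro m _
    apply tendsto_finset_sum
    intro n _
    exact (inner_limit ψ hanal hmaps hψ0 hinner m n).const_mul _
  have hRval : (∑ m ∈ Finset.range N, ∑ n ∈ Finset.range N,
      (p m * (starRingEnd ℂ) (p n)) * (if m = n then ((2*π:ℝ):ℂ) else 0))
      = (((2*π) * ∑' k, ‖p k‖^2 : ℝ) : ℂ) := by
    have h1 : ∀ m ∈ Finset.range N, (∑ n ∈ Finset.range N,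
        (p m * (starRingEnd ℂ) (p n)) * (if m = n then ((2*π:ℝ):ℂ) else 0))
        = ((‖p m‖^2 * (2*π) : ℝ) : ℂ) := by
      intro m hm
      have hterm : ∀ n ∈ Finset.range N, (p m * (starRingEnd ℂ) (p n)) *
          (if m = n then ((2*π:ℝ):ℂ) else 0)
          = if m = n then (p m * (starRingEnd ℂ) (p m)) * ((2*π:ℝ):ℂ) else 0 := by
        intro n _
        split_ifs with hmn
        · subst hmn; rfl
        · exact mul_zero _
      rw [Finset.sum_congr rfl hterm, Finset.sum_ite_eq (Finset.range N) m
        (fun _ => (p m * (starRingEnd ℂ) (p m)) * ((2*π:ℝ):ℂ)), if_pos hm]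
      rw [Complex.mul_conj, Complex.normSq_eq_norm_sq]
      push_cast
      ring
    rw [Finset.sum_congr rfl h1]
    have h2 : ∑' k, ‖p k‖^2 = ∑ m ∈ Finset.range N, ‖p m‖^2 := by
      apply tsum_eq_sum
      intro m hm
      rw [hp m (le_of_not_gt (by simpa using hm))]
      simp
    rw [h2]
    push_cast
    rw [← Finset.sum_mul]
    ring
  have hL' := hL.congr hchain
  have hR2 : Tendsto (fun j => ∑ m ∈ Finset.range N, ∑ n ∈ Finset.range N,
      (p m * (starRingEnd ℂ) (p n)) *
        ∫ θ in Set.Ioc (0:ℝ) (2*π), ψ (w j θ)^m * (starRingEnd ℂ) (ψ (w j θ))^n) atTop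
      (𝓝 ((((2*π) * ∑' k, ‖p k‖^2 : ℝ)) : ℂ)) := by
    rw [← hRval]; exact hR
  have huniq := tendsto_nhds_unique hL' hR2
  have hreal : (2*π) * ∑' k, ‖(T p) k‖^2 = (2*π) * ∑' k, ‖p k‖^2 :=
    Complex.ofReal_injective huniq
  have h2pi : (0:ℝ) < 2*π := by positivity
  have hsq : ‖T p‖^2 = ‖p‖^2 := by
    rw [norm_sq_eq (T p), norm_sq_eq p]
    have := mul_left_cancel₀ (ne_of_gt h2pi) hreal
    exact this
  rw [← Real.sqrt_sq (norm_nonneg (T p)), ← Real.sqrt_sq (norm_nonneg p), hsq]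

lemma norm_le_T (ψ : ℂ → ℂ)
    (hanal : DifferentiableOn ℂ ψ (ball (0:ℂ) 1))
    (hmaps : Set.MapsTo ψ (ball (0:ℂ) 1) (ball (0:ℂ) 1))
    (hψ0 : ψ 0 = 0)
    (hinner : ∀ᵐ θ : ℝ, Filter.Tendsto
      (fun ρ : ℝ => ‖ψ ((ρ : ℂ) * Complex.exp ((θ : ℂ) * Complex.I))‖)
      (nhdsWithin 1 (Set.Iio 1)) (nhds 1))
    (T : H2 →L[ℂ] H2)
    (hT : ∀ (f : H2), ∀ z ∈ ball (0:ℂ) 1, evalH2 (T f) z = evalH2 f (ψ z))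
    (f : H2) : ‖f‖ ≤ ‖T f‖ := by
  by_contra hcon
  push_neg at hcon
  set ε : ℝ := (‖f‖ - ‖T f‖)/(2*(1+‖T‖)) with hεdef
  have hTnn : (0:ℝ) ≤ ‖T‖ := norm_nonneg _
  have hεpos : 0 < ε := div_pos (by linarith) (by linarith)
  have hs := lp.hasSum_single (E := fun _ : ℕ => ℂ) (p := (2:ℝ≥0∞)) (by norm_num) f
  rw [HasSum, SummationFilter.unconditional_filter, Metric.tendsto_atTop] at hs
  obtain ⟨s, hs'⟩ := hs ε hεpos
  set q : H2 := ∑ i ∈ s, lp.single 2 i (f i) with hqdef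
  have hdist : ‖q - f‖ < ε := by
    have := hs' s le_rfl
    rwa [dist_eq_norm] at this
  have hqz : ∀ m, (s.sup id) + 1 ≤ m → q m = 0 := by
    intro m hm
    have hms : m ∉ s := by
      intro hmem
      have := Finset.le_sup (f := id) hmem
      simp only [id] at this
      omega
    have hcoe : (q : ∀ _ : ℕ, ℂ) m = ∑ i ∈ s, (lp.single 2 i (f i) : ∀ _ : ℕ, ℂ) m := by
      rw [hqdef, lp.coeFn_sum, Finset.sum_apply]
    rw [hcoe]
    apply Finset.sum_eq_zero
    intro i hi
    rw [lp.single_apply, Pi.single_apply, if_neg]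
    intro hmi
    exact hms (hmi ▸ hi)
  have hiso : ‖T q‖ = ‖q‖ := normT_eq ψ hanal hmaps hψ0 hinner T hT q (s.sup id + 1) hqz
  have h1 : ‖f‖ ≤ ‖q‖ + ε := by
    have hfq : f = q - (q - f) := by abel
    calc ‖f‖ = ‖q - (q - f)‖ := by rw [← hfq]
      _ ≤ ‖q‖ + ‖q - f‖ := norm_sub_le _ _
      _ ≤ ‖q‖ + ε := by linarith
  have h2 : ‖T q‖ ≤ ‖T f‖ + ‖T‖ * ε := by
    have hTq : T q = T f + T (q - f) := by rw [map_sub]; abel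
    rw [hTq]
    refine (norm_add_le _ _).trans ?_
    have h3 : ‖T (q - f)‖ ≤ ‖T‖ * ‖q - f‖ := T.le_opNorm _
    have h4 : ‖T‖ * ‖q - f‖ ≤ ‖T‖ * ε := mul_le_mul_of_nonneg_left hdist.le (norm_nonneg _)
    linarith
  have hfinal : ‖f‖ ≤ ‖T f‖ + (1 + ‖T‖) * ε := by linarith
  have hcalc : (1 + ‖T‖) * ε = (‖f‖ - ‖T f‖)/2 := by
    have hne : (1 + ‖T‖) ≠ 0 := by linarith
    rw [hεdef, ← mul_div_assoc, mul_comm (2:ℝ) (1+‖T‖)]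
    exact mul_div_mul_left _ _ hne
  rw [hcalc] at hfinal
  linarith

theorem stmt6_aux (ψ : ℂ → ℂ)
    (hanal : DifferentiableOn ℂ ψ (ball (0:ℂ) 1))
    (hmaps : Set.MapsTo ψ (ball (0:ℂ) 1) (ball (0:ℂ) 1))
    (hψ0 : ψ 0 = 0)
    (hinner : ∀ᵐ θ : ℝ, Filter.Tendsto
      (fun r : ℝ => ‖ψ ((r : ℂ) * Complex.exp ((θ : ℂ) * Complex.I))‖)
      (nhdsWithin 1 (Set.Iio 1)) (nhds 1))
    (hnotauto : ¬ Set.BijOn ψ (ball (0:ℂ) 1) (ball (0:ℂ) 1))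
    (hDW : ∀ z ∈ ball (0:ℂ) 1, Filter.Tendsto (fun n : ℕ => ψ^[n] z) atTop (nhds 0))
    (T : H2 →L[ℂ] H2)
    (hT : ∀ (f : H2), ∀ z ∈ ball (0:ℂ) 1, evalH2 (T f) z = evalH2 f (ψ z)) :
    (⋂ n : ℕ, ⇑(T ^ n) '' {f : H2 | evalH2 f 0 = 0}) = {0} := by
  have hnormle : ∀ (nn : ℕ) (h : H2), ‖h‖ ≤ ‖(T ^ nn) h‖ := by
    intro nn
    induction nn with
    | zero => intro h; simp
    | succ k ih =>
      intro h
      have h1 : (T ^ (k+1)) h = (T ^ k) (T h) := by rw [pow_succ]; rfl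
      rw [h1]
      exact le_trans (norm_le_T ψ hanal hmaps hψ0 hinner T hT h) (ih (T h))
  apply Set.eq_singleton_iff_unique_mem.2
  constructor
  · apply Set.mem_iInter.2
    intro nn
    refine ⟨0, ?_, map_zero _⟩
    simp only [Set.mem_setOf_eq, evalH2_at_zero]
    simp [lp.coeFn_zero]
  · intro g hg
    rw [Set.mem_iInter] at hg
    have hz : ∀ z ∈ ball (0:ℂ) 1, evalH2 g z = 0 := by
      intro z hz
      have hbound : ∀ nn : ℕ, ‖evalH2 g z‖ ≤ ‖g‖ * ‖ψ^[nn] z‖ / (1 - ‖ψ^[nn] z‖) := by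
        intro nn
        obtain ⟨fnn, hf0, hfT⟩ := hg nn
        have hmem : ψ^[nn] z ∈ ball (0:ℂ) 1 := hmaps.iterate nn hz
        have hmemlt : ‖ψ^[nn] z‖ < 1 := mem_ball_zero_iff.1 hmem
        have he : evalH2 g z = evalH2 fnn (ψ^[nn] z) := by
          rw [← hfT]
          exact eval_pow_iter ψ hmaps T hT nn fnn z hz
        rw [he]
        refine (evalH2_bound_of_zero fnn hf0 hmemlt).trans ?_
        have hfg : ‖fnn‖ ≤ ‖g‖ := by
          have := hnormle nn fnn
          rwa [hfT] at this
        have hden : (0:ℝ) < 1 - ‖ψ^[nn] z‖ := by linarith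
        exact (div_le_div_iff_of_pos_right hden).2 (mul_le_mul_of_nonneg_right hfg (norm_nonneg _))
      have hn : Tendsto (fun nn => ‖ψ^[nn] z‖) atTop (𝓝 0) := by
        have := (hDW z hz).norm
        simpa using this
      have hcont : ContinuousAt (fun x : ℝ => ‖g‖ * x / (1 - x)) 0 := by
        apply ContinuousAt.div
        · fun_prop
        · fun_prop
        · norm_num
      have hlim : Tendsto (fun nn => ‖g‖ * ‖ψ^[nn] z‖ / (1 - ‖ψ^[nn] z‖)) atTop (𝓝 0) := by
        have h2 := hcont.tendsto.comp hn
        simp only [Function.comp_def] at h2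
        simpa using h2
      have hle0 : ‖evalH2 g z‖ ≤ 0 := ge_of_tendsto hlim (Eventually.of_forall hbound)
      exact norm_le_zero_iff.1 hle0
    have hzero : ∀ θ : ℝ, evalH2 g (((1/2:ℝ):ℂ) * Complex.exp ((θ:ℂ)*Complex.I)) = 0 := by
      intro θ
      apply hz
      rw [mem_ball_zero_iff]
      simp only [norm_mul, Complex.norm_real, Real.norm_eq_abs, Complex.norm_exp_ofReal_mul_I,
        mul_one]
      rw [_root_.abs_of_nonneg (by norm_num : (0:ℝ) ≤ 1/2)]
      norm_num
    have hpar := parseval g (r := 1/2) (by norm_num) (by norm_num)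
    have hint0 : (∫ θ in Set.Ioc (0:ℝ) (2*π),
        evalH2 g (((1/2:ℝ):ℂ) * Complex.exp ((θ:ℂ) * Complex.I)) *
        (starRingEnd ℂ) (evalH2 g (((1/2:ℝ):ℂ) * Complex.exp ((θ:ℂ) * Complex.I)))) = 0 := by
      rw [setIntegral_congr_fun (g := fun _ : ℝ => (0:ℂ)) measurableSet_Ioc
        (fun θ _ => by rw [hzero θ]; ring)]
      simp
    rw [hint0] at hpar
    have hreal0 : (2*π) * (∑' k : ℕ, ‖g k‖^2 * (1/2:ℝ)^(2*k)) = 0 := by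
      exact_mod_cast hpar.symm
    have hsum0 : (∑' k : ℕ, ‖g k‖^2 * (1/2:ℝ)^(2*k)) = 0 := by
      have h2pi : (2*π:ℝ) ≠ 0 := by positivity
      exact (mul_eq_zero.1 hreal0).resolve_left h2pi
    have hgsum : Summable (fun k : ℕ => ‖g k‖^2 * (1/2:ℝ)^(2*k)) := by
      have h1 := (lp.memℓp g).summable (p := 2) (by norm_num)
      have h1' : Summable (fun k : ℕ => ‖g k‖^2) := by
        apply h1.congr
        intro k
        rw [show ((2:ℝ≥0∞)).toReal = (2:ℝ) by norm_num, Real.rpow_two]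
      apply Summable.of_nonneg_of_le (fun k => by positivity) _ h1'
      intro k
      calc ‖g k‖^2 * (1/2:ℝ)^(2*k) ≤ ‖g k‖^2 * 1 := by
            apply mul_le_mul_of_nonneg_left (pow_le_one₀ (by norm_num) (by norm_num)) (sq_nonneg _)
        _ = ‖g k‖^2 := mul_one _
    have hcoef : ∀ k : ℕ, ‖g k‖^2 = 0 := by
      intro k
      have hle := Summable.le_tsum hgsum k (fun j _ => by positivity)
      rw [hsum0] at hle
      have hge : 0 ≤ ‖g k‖^2 * (1/2:ℝ)^(2*k) := by positivity
      have h0 : ‖g k‖^2 * (1/2:ℝ)^(2*k) = 0 := le_antisymm hle hge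
      have hpow : ((1/2:ℝ))^(2*k) ≠ 0 := by positivity
      exact (mul_eq_zero.1 h0).resolve_right hpow
    have hgnorm : ‖g‖ = 0 := by
      have h1 : ‖g‖^2 = 0 := by
        rw [norm_sq_eq g, tsum_congr hcoef]
        exact tsum_zero
      exact pow_eq_zero_iff (by norm_num) |>.1 h1
    exact norm_eq_zero.1 hgnorm

/-- If `ψ` is inner, `ψ 0 = 0`, `ψ` is not an automorphism (so `0` is its Denjoy–Wolff
point and the iterates tend to `0`), and `T = C_ψ` is the composition operator on `H²`,
then `⋂ n, C_ψ^n H²₀ = {0}`. -/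
theorem stmt6 (ψ : ℂ → ℂ)
    (hanal : DifferentiableOn ℂ ψ (ball (0:ℂ) 1))
    (hmaps : Set.MapsTo ψ (ball (0:ℂ) 1) (ball (0:ℂ) 1))
    (hψ0 : ψ 0 = 0)
    (hinner : IsInnerFn ψ)
    (hnotauto : ¬ Set.BijOn ψ (ball (0:ℂ) 1) (ball (0:ℂ) 1))
    (hDW : ∀ z ∈ ball (0:ℂ) 1, Filter.Tendsto (fun n : ℕ => ψ^[n] z) atTop (nhds 0))
    (T : H2 →L[ℂ] H2)
    (hT : ∀ (f : H2), ∀ z ∈ ball (0:ℂ) 1, evalH2 (T f) z = evalH2 f (ψ z)) :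
    (⋂ n : ℕ, ⇑(T ^ n) '' {f : H2 | evalH2 f 0 = 0}) = {0} := by
  exact stmt6_aux ψ hanal hmaps hψ0 hinner hnotauto hDW T hT
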